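/- (Paths avoiding a small set) Let g, h : ℕ → ℕ with g(n) < h(n) for all n. Let T be a tree containing the empty string such that every τ ∈ T has at least h(|τ|) immediate extensions in T (in particular T has no leaves), and let B be a set of strings that is g-small above the empty string. Then there exists a function f : ℕ → ℕ such that for every n, the string ⟨f(0), …, f(n−1)⟩ belongs to T and does not belong to B. -/
import Mathlib


/-- A tree is a set of strings (finite sequences of naturals) closed under prefixes. -/
def IsTree (T : Set (List ℕ)) : Prop :=
  ∀ σ ∈ T, ∀ τ : List ℕ, τ <+: σ → τ ∈ T

/-- A leaf of `T` is an element of `T` with no immediate extension in `T`. -/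
def IsLeaf (T : Set (List ℕ)) (τ : List ℕ) : Prop :=
  τ ∈ T ∧ ∀ a : ℕ, τ ++ [a] ∉ T

/-- A tree `T` is `h`-bushy above `σ`: `σ ∈ T`, every element of `T` is comparable
with `σ`, and every non-leaf `τ ∈ T` extending `σ` has at least `h |τ|` immediate
extensions in `T`. -/
def BushyAbove (h : ℕ → ℕ) (σ : List ℕ) (T : Set (List ℕ)) : Prop :=
  IsTree T ∧ σ ∈ T ∧
  (∀ τ ∈ T, τ <+: σ ∨ σ <+: τ) ∧
  (∀ τ ∈ T, σ <+: τ → ¬ IsLeaf T τ → (h τ.length : ℕ∞) ≤ {a : ℕ | τ ++ [a] ∈ T}.encard)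

/-- `B` is `h`-big above `σ` if there is a finite tree, `h`-bushy above `σ`,
all of whose leaves belong to `B`. -/
def BigAbove (h : ℕ → ℕ) (σ : List ℕ) (B : Set (List ℕ)) : Prop :=
  ∃ T : Set (List ℕ), T.Finite ∧ BushyAbove h σ T ∧ ∀ τ, IsLeaf T τ → τ ∈ B

/-- `B` is `h`-small above `σ` if it is not `h`-big above `σ`. -/
def SmallAbove (h : ℕ → ℕ) (σ : List ℕ) (B : Set (List ℕ)) : Prop :=
  ¬ BigAbove h σ B

lemma prefix_setOf_finite (τ : List ℕ) : {ρ : List ℕ | ρ <+: τ}.Finite := by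
  have : {ρ : List ℕ | ρ <+: τ} = {ρ | ρ ∈ τ.inits} := by
    ext ρ; simp [List.mem_inits]
  rw [this]; exact (τ.inits).finite_toSet

lemma exists_succ_prefix {ρ τ : List ℕ} (hpre : ρ <+: τ) (hne : ρ ≠ τ) :
    ∃ b, ρ ++ [b] <+: τ := by
  obtain ⟨t, rfl⟩ := hpre
  cases t with
  | nil => simp at hne
  | cons b t' => exact ⟨b, t', by simp⟩

lemma prefix_antisymm' {ρ τ : List ℕ} (h1 : ρ <+: τ) (h2 : τ <+: ρ) : ρ = τ :=
  h1.eq_of_length (le_antisymm h1.length_le h2.length_le)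

lemma bigAbove_self (g : ℕ → ℕ) (τ : List ℕ) (B : Set (List ℕ)) (hτ : τ ∈ B) :
    BigAbove g τ B := by
  refine ⟨{ρ | ρ <+: τ}, prefix_setOf_finite τ,
    ⟨fun σ hσ ρ hρ => hρ.trans hσ, List.prefix_refl τ, fun ρ hρ => Or.inl hρ, ?_⟩, ?_⟩
  · intro ρ hρ hτρ hleaf
    exfalso
    have hrt : ρ = τ := prefix_antisymm' hρ hτρ
    subst hrt
    exact hleaf ⟨hρ, fun a ha => by
      have := ha.length_le; simp at this⟩
  · intro ρ ⟨hρ, hnoext⟩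
    by_cases hrt : ρ = τ
    · exact hrt ▸ hτ
    · obtain ⟨b, hb⟩ := exists_succ_prefix hρ hrt
      exact absurd hb (hnoext b)

lemma step_lemma (g h : ℕ → ℕ) (hgh : ∀ n, g n < h n)
    (T : Set (List ℕ))
    (hbranch : ∀ τ ∈ T, (h τ.length : ℕ∞) ≤ {a : ℕ | τ ++ [a] ∈ T}.encard)
    (B : Set (List ℕ)) (σ : List ℕ) (hσT : σ ∈ T) (hsmall : SmallAbove g σ B) :
    ∃ a, σ ++ [a] ∈ T ∧ SmallAbove g (σ ++ [a]) B := by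
  by_contra hcon
  push_neg at hcon
  simp only [SmallAbove, not_not] at hcon
  -- every a with σ++[a] ∈ T gives BigAbove g (σ++[a]) B
  have hext : (↑(g σ.length) + 1 : ℕ∞) ≤ {a : ℕ | σ ++ [a] ∈ T}.encard := by
    refine le_trans ?_ (hbranch σ hσT)
    have := hgh σ.length
    exact_mod_cast Nat.succ_le_of_lt this
  obtain ⟨S, hSsub, hScard⟩ := Set.exists_subset_encard_eq hext
  have hScard' : S.encard = ((g σ.length + 1 : ℕ) : ℕ∞) := by
    rw [hScard]; push_cast; ring
  have hSfin : S.Finite := Set.finite_of_encard_eq_coe hScard'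
  have hSne : S.Nonempty := by
    rw [Set.nonempty_iff_ne_empty]
    intro hS; rw [hS, Set.encard_empty] at hScard'
    exact (by simp : ((g σ.length + 1 : ℕ) : ℕ∞) ≠ 0) hScard'.symm
  have hbig : ∀ a ∈ S, BigAbove g (σ ++ [a]) B := fun a ha => hcon a (hSsub ha)
  choose! F hFfin hFbushy hFleaf using hbig
  -- components of bushiness
  have hFtree : ∀ a ∈ S, IsTree (F a) := fun a ha => (hFbushy a ha).1
  have hFmem : ∀ a ∈ S, σ ++ [a] ∈ F a := fun a ha => (hFbushy a ha).2.1
  have hFcomp : ∀ a ∈ S, ∀ ρ ∈ F a, ρ <+: σ ++ [a] ∨ σ ++ [a] <+: ρ :=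
    fun a ha => (hFbushy a ha).2.2.1
  have hFbush : ∀ a ∈ S, ∀ ρ ∈ F a, σ ++ [a] <+: ρ → ¬ IsLeaf (F a) ρ →
      (g ρ.length : ℕ∞) ≤ {b : ℕ | ρ ++ [b] ∈ F a}.encard :=
    fun a ha => (hFbushy a ha).2.2.2
  set U : Set (List ℕ) := {ρ | ρ <+: σ} ∪ ⋃ a ∈ S, F a with hU
  -- C1
  have C1 : ∀ a ∈ S, ∀ ρ ∈ F a, ρ <+: σ ∨ σ ++ [a] <+: ρ := by
    intro a ha ρ hρ
    rcases hFcomp a ha ρ hρ with h1 | h1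
    · by_cases he : ρ = σ ++ [a]
      · exact Or.inr (he ▸ List.prefix_refl ρ)
      · left
        have hlen : ρ.length ≤ σ.length := by
          have h2 := h1.length_le
          simp only [List.length_append, List.length_singleton] at h2
          rcases lt_or_eq_of_le h2 with h3 | h3
          · omega
          · exact absurd (h1.eq_of_length (by simpa using h3)) he
        exact List.prefix_of_prefix_length_le h1 (List.prefix_append σ [a]) hlen
    · exact Or.inr h1
  have hsub : ∀ a ∈ S, F a ⊆ U := fun a ha ρ hρ =>
    Or.inr (Set.mem_biUnion ha hρ)
  -- C2: strict extensions of σ in U live in a single F a with same extension set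
  have C2 : ∀ ρ ∈ U, σ <+: ρ → ρ ≠ σ →
      ∃ a ∈ S, ρ ∈ F a ∧ σ ++ [a] <+: ρ ∧
        {b : ℕ | ρ ++ [b] ∈ U} = {b : ℕ | ρ ++ [b] ∈ F a} := by
    intro ρ hρ hσρ hne
    rcases hρ with h1 | h1
    · exact absurd (prefix_antisymm' h1 hσρ) hne
    · obtain ⟨a, ha, hρa⟩ := by simpa using h1
      have hext : σ ++ [a] <+: ρ := by
        rcases C1 a ha ρ hρa with h2 | h2
        · exact absurd (prefix_antisymm' h2 hσρ) hne
        · exact h2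
      refine ⟨a, ha, hρa, hext, ?_⟩
      ext b
      simp only [Set.mem_setOf_eq]
      constructor
      · intro hb
        rcases hb with h2 | h2
        · exfalso
          have := h2.length_le
          have := hσρ.length_le
          simp only [List.length_append, List.length_singleton] at *
          omega
        · obtain ⟨a', ha', hρa'⟩ := by simpa using h2
          have hext' : σ ++ [a'] <+: ρ ++ [b] := by
            rcases C1 a' ha' _ hρa' with h3 | h3
            · exfalso
              have h4 := h3.length_le
              have h5 := hσρ.length_le
              simp only [List.length_append, List.length_singleton] at *
              omega
            · exact h3
          have heq : σ ++ [a'] = σ ++ [a] := by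
            have hA : σ ++ [a] <+: ρ ++ [b] := hext.trans (List.prefix_append ρ [b])
            rcases List.prefix_or_prefix_of_prefix hext' hA with h4 | h4
            · exact h4.eq_of_length (by simp)
            · exact (h4.eq_of_length (by simp)).symm
          have : a' = a := by simpa using heq
          exact this ▸ hρa'
      · intro hb; exact hsub a ha hb
  -- build contradiction
  apply hsmall
  refine ⟨U, ?_, ⟨?_, Or.inl (List.prefix_refl σ), ?_, ?_⟩, ?_⟩
  · exact (prefix_setOf_finite σ).union (Set.Finite.biUnion hSfin (fun a ha => hFfin a ha))
  · -- IsTree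
    intro x hx τ hτ
    rcases hx with h1 | h1
    · exact Or.inl (hτ.trans h1)
    · obtain ⟨a, ha, hxa⟩ := by simpa using h1
      exact hsub a ha (hFtree a ha x hxa τ hτ)
  · -- comparability
    intro ρ hρ
    rcases hρ with h1 | h1
    · exact Or.inl h1
    · obtain ⟨a, ha, hρa⟩ := by simpa using h1
      rcases C1 a ha ρ hρa with h2 | h2
      · exact Or.inl h2
      · exact Or.inr ((List.prefix_append σ [a]).trans h2)
  · -- bushiness
    intro ρ hρ hσρ hleaf
    by_cases hne : ρ = σ
    · subst hne
      have hSsubext : S ⊆ {b : ℕ | ρ ++ [b] ∈ U} := fun a ha => hsub a ha (hFmem a ha)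
      calc (g ρ.length : ℕ∞) ≤ ((g ρ.length + 1 : ℕ) : ℕ∞) := by exact_mod_cast Nat.le_succ _
        _ = S.encard := hScard'.symm
        _ ≤ _ := Set.encard_mono hSsubext
    · obtain ⟨a, ha, hρa, hexta, hexteq⟩ := C2 ρ hρ hσρ hne
      rw [hexteq]
      apply hFbush a ha ρ hρa hexta
      intro hlf
      refine hleaf ⟨hρ, fun b hb => hlf.2 b ?_⟩
      have hb' : b ∈ {b : ℕ | ρ ++ [b] ∈ U} := hb
      rw [hexteq] at hb'
      exact hb'
  · -- leaves in B
    intro ρ ⟨hρ, hnoext⟩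
    have hcomp : ρ <+: σ ∨ σ <+: ρ := by
      rcases hρ with h1 | h1
      · exact Or.inl h1
      · obtain ⟨a, ha, hρa⟩ := by simpa using h1
        rcases C1 a ha ρ hρa with h2 | h2
        · exact Or.inl h2
        · exact Or.inr ((List.prefix_append σ [a]).trans h2)
    by_cases hne : ρ = σ
    · exfalso
      obtain ⟨a, ha⟩ := hSne
      exact hnoext a (hne ▸ hsub a ha (hFmem a ha))
    · rcases hcomp with h1 | h1
      · exfalso
        obtain ⟨b, hb⟩ := exists_succ_prefix h1 hne
        exact hnoext b (Or.inl hb)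
      · obtain ⟨a, ha, hρa, _, hexteq⟩ := C2 ρ hρ h1 hne
        apply hFleaf a ha
        exact ⟨hρa, fun b hb => hnoext b (hsub a ha hb)⟩

/-- Paths avoiding a small set: if every node of `T` of length `i` has at least `h i`
immediate extensions, `g < h` pointwise, and `B` is `g`-small above the empty string,
then there is an infinite path through `T` avoiding `B`. -/
theorem path_avoiding_small_set (g h : ℕ → ℕ) (hgh : ∀ n, g n < h n)
    (T : Set (List ℕ)) (hTtree : IsTree T) (hnil : ([] : List ℕ) ∈ T)
    (hbranch : ∀ τ ∈ T, (h τ.length : ℕ∞) ≤ {a : ℕ | τ ++ [a] ∈ T}.encard)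
    (B : Set (List ℕ)) (hB : SmallAbove g [] B) :
    ∃ f : ℕ → ℕ, ∀ n : ℕ,
      List.ofFn (fun i : Fin n => f i) ∈ T ∧ List.ofFn (fun i : Fin n => f i) ∉ B := by
  have key : ∀ σ : List ℕ, σ ∈ T → SmallAbove g σ B →
      ∃ a, σ ++ [a] ∈ T ∧ SmallAbove g (σ ++ [a]) B :=
    fun σ => step_lemma g h hgh T hbranch B σ
  choose! A hA1 hA2 using key
  let seq : ℕ → List ℕ := fun n => n.rec [] (fun _ ih => ih ++ [A ih])
  have hseqsucc : ∀ n, seq (n + 1) = seq n ++ [A (seq n)] := fun n => rfl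
  have hinv : ∀ n, seq n ∈ T ∧ SmallAbove g (seq n) B := by
    intro n
    induction n with
    | zero => exact ⟨hnil, hB⟩
    | succ n ih =>
      rw [hseqsucc]
      exact ⟨hA1 _ ih.1 ih.2, hA2 _ ih.1 ih.2⟩
  refine ⟨fun n => A (seq n), fun n => ?_⟩
  have hofFn : List.ofFn (fun i : Fin n => A (seq i)) = seq n := by
    induction n with
    | zero => rfl
    | succ n ih =>
      rw [List.ofFn_succ', hseqsucc]
      simp only [Fin.coe_castSucc, Fin.val_last, List.concat_eq_append]
      rw [ih]
  rw [hofFn]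
  exact ⟨(hinv n).1, fun hmem => (hinv n).2 (bigAbove_self g _ B hmem)⟩
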